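/- Fix d ≥ 1 and an infinite-dimensional separable complex Hilbert space H. For a tuple T = (T₁,…,T_d) of bounded operators on H and p ∈ ℂ⟨x₁,…,x_d⟩, let p(T) denote the image of p under the unique unital algebra homomorphism ℂ⟨x₁,…,x_d⟩ → B(H) sending x_i to T_i. For a two-sided ideal J of ℂ⟨x₁,…,x_d⟩ set Z(J) := {T ∈ B(H)^d : p(T) = 0 for all p ∈ J}. If J is homogeneous, then {p ∈ ℂ⟨x₁,…,x_d⟩ : p(T) = 0 for every T ∈ Z(J)} = J. In particular, Z(J) = {(0,…,0)} if and only if J is the two-sided ideal generated by x₁,…,x_d. -/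

import Mathlib

noncomputable section

/-- The free (noncommutative polynomial) algebra `ℂ⟨x₁,…,x_d⟩`. -/
abbrev FreeAlg (d : ℕ) : Type := MonoidAlgebra ℂ (FreeMonoid (Fin d))

/-- `p` is homogeneous of degree `n`. -/
def IsHomog {d : ℕ} (n : ℕ) (p : FreeAlg d) : Prop :=
  ∀ w ∈ p.coeff.support, FreeMonoid.length w = n

/-- The homogeneous component of degree `n`. -/
def homogComp {d : ℕ} (n : ℕ) (p : FreeAlg d) : FreeAlg d :=
  MonoidAlgebra.ofCoeff (Finsupp.filter (fun w : FreeMonoid (Fin d) => FreeMonoid.length w = n) p.coeff)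

/-- A two-sided ideal is homogeneous if it contains every homogeneous component of each of
its elements. -/
def IsHomogIdeal {d : ℕ} (I : TwoSidedIdeal (FreeAlg d)) : Prop :=
  ∀ p ∈ I, ∀ n : ℕ, homogComp n p ∈ I

/-- Evaluation `p ↦ p(T)`: the unique unital algebra homomorphism `ℂ⟨x₁,…,x_d⟩ → A`
sending `x_i` to `T_i`. -/
def evalTuple {d : ℕ} {A : Type*} [Semiring A] [Algebra ℂ A] (T : Fin d → A) :
    FreeAlg d →ₐ[ℂ] A :=
  MonoidAlgebra.lift ℂ A (FreeMonoid (Fin d)) (FreeMonoid.lift T)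

namespace NCNull

variable {d : ℕ}

section quot

variable (J : TwoSidedIdeal (FreeAlg d)) (N : ℕ)

open scoped Classical

/-- polynomials supported in degrees `> N` -/
def Sdeg (d : ℕ) (N : ℕ) : Submodule ℂ (FreeAlg d) where
  carrier := {q | ∀ w ∈ q.coeff.support, N < FreeMonoid.length w}
  add_mem' := by
    intro a b ha hb w hw
    rcases Finset.mem_union.mp (Finsupp.support_add (g₁ := a.coeff) (g₂ := b.coeff) hw) with h | h
    exacts [ha w h, hb w h]
  zero_mem' := by simp
  smul_mem' := by
    intro c a ha w hw
    exact ha w (Finsupp.support_smul (g := a.coeff) hw)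

def Jmod : Submodule ℂ (FreeAlg d) where
  carrier := J
  add_mem' := J.add_mem
  zero_mem' := J.zero_mem
  smul_mem' := by
    intro c q hq
    rw [Algebra.smul_def]
    exact J.mul_mem_left _ _ hq

def Mmod : Submodule ℂ (FreeAlg d) := Jmod J ⊔ Sdeg d N

lemma mem_Sdeg {q : FreeAlg d} : q ∈ Sdeg d N ↔ ∀ w ∈ q.coeff.support, N < FreeMonoid.length w :=
  Iff.rfl

lemma mul_mem_Mmod (q : FreeAlg d) : ∀ m ∈ Mmod J N, q * m ∈ Mmod J N := by
  intro m hm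
  obtain ⟨j, hj, s, hs, rfl⟩ := Submodule.mem_sup.mp hm
  rw [mul_add]
  refine Submodule.add_mem _ (Submodule.mem_sup_left ?_) (Submodule.mem_sup_right ?_)
  · exact J.mul_mem_left _ _ hj
  · intro w hw
    obtain ⟨u, hu, v, hv, rfl⟩ := Finset.mem_mul.mp (MonoidAlgebra.support_coeff_mul_subset q s hw)
    have := hs v hv
    rw [FreeMonoid.length_mul]
    omega

lemma mul_le_comap_Mmod (q : FreeAlg d) :
    Mmod J N ≤ (Mmod J N).comap (LinearMap.mulLeft ℂ q) := fun m hm => mul_mem_Mmod J N q m hm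

def psi : FreeAlg d →ₐ[ℂ] Module.End ℂ (FreeAlg d ⧸ Mmod J N) where
  toFun q := Submodule.mapQ _ _ (LinearMap.mulLeft ℂ q)
    (mul_le_comap_Mmod J N q)
  map_one' := by
    apply Submodule.linearMap_qext
    ext x
    simp [Submodule.mapQ_apply]
  map_mul' q r := by
    apply Submodule.linearMap_qext
    ext x
    simp [Submodule.mapQ_apply, Module.End.mul_apply, mul_assoc]
  map_zero' := by
    apply Submodule.linearMap_qext
    ext x
    simp [Submodule.mapQ_apply]
  map_add' q r := by
    apply Submodule.linearMap_qext
    ext x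
    simp [Submodule.mapQ_apply, add_mul]
  commutes' c := by
    apply Submodule.linearMap_qext
    refine LinearMap.ext fun x => ?_
    simp only [LinearMap.comp_apply, Submodule.mkQ_apply, Submodule.mapQ_apply,
      LinearMap.mulLeft_apply, Module.algebraMap_end_apply]
    rw [← Algebra.smul_def, ← Submodule.Quotient.mk_smul]

lemma psi_apply (q x : FreeAlg d) :
    psi J N q (Submodule.Quotient.mk x) = Submodule.Quotient.mk (q * x) := by
  simp [psi, Submodule.mapQ_apply]

lemma psi_eq_zero_of_mem {q : FreeAlg d} (hq : q ∈ J) : psi J N q = 0 := by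
  apply Submodule.linearMap_qext
  refine LinearMap.ext fun x => ?_
  rw [LinearMap.comp_apply, Submodule.mkQ_apply, psi_apply]
  simp only [LinearMap.comp_apply, LinearMap.zero_apply, Submodule.mkQ_apply]
  rw [Submodule.Quotient.mk_eq_zero]
  exact Submodule.mem_sup_left (J.mul_mem_right _ _ hq)

lemma finiteDimensional_quot : FiniteDimensional ℂ (FreeAlg d ⧸ Mmod J N) := by
  have hfin : ((fun w => MonoidAlgebra.single w (1 : ℂ)) ''
      {w : FreeMonoid (Fin d) | FreeMonoid.length w ≤ N}).Finite :=
    Set.Finite.image _ (List.finite_length_le (Fin d) N)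
  set Wset := (fun w => MonoidAlgebra.single w (1 : ℂ)) ''
      {w : FreeMonoid (Fin d) | FreeMonoid.length w ≤ N} with hW
  haveI : FiniteDimensional ℂ (Submodule.span ℂ Wset) :=
    FiniteDimensional.span_of_finite ℂ hfin
  apply Module.Finite.of_surjective ((Mmod J N).mkQ ∘ₗ (Submodule.span ℂ Wset).subtype)
  intro v
  obtain ⟨x, rfl⟩ := Submodule.mkQ_surjective _ v
  set x1 : FreeAlg d := MonoidAlgebra.ofCoeff (Finsupp.filter (fun w => FreeMonoid.length w ≤ N) x.coeff) with hx1def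
  have hx1 : x1 ∈ Submodule.span ℂ Wset := by
    rw [← MonoidAlgebra.sum_coeff_single x1]
    apply Submodule.finsuppSum_mem
    intro w hw
    have hwN : FreeMonoid.length w ≤ N := by
      by_contra h
      simp [hx1def, Finsupp.filter_apply, h] at hw
    have : MonoidAlgebra.single w (x1.coeff w) = (x1.coeff w) • MonoidAlgebra.single w (1 : ℂ) := by
      rw [MonoidAlgebra.smul_single, smul_eq_mul, mul_one]
    rw [this]
    exact Submodule.smul_mem _ _ (Submodule.subset_span ⟨w, hwN, rfl⟩)
  refine ⟨⟨x1, hx1⟩, ?_⟩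
  show Submodule.Quotient.mk x1 = Submodule.Quotient.mk x
  rw [Submodule.Quotient.eq]
  set b : FreeAlg d := MonoidAlgebra.ofCoeff (Finsupp.filter (fun w => ¬ FreeMonoid.length w ≤ N) x.coeff) with hbdef
  have hab : x1 + b = x := by
    rw [hx1def, hbdef]
    exact congrArg MonoidAlgebra.ofCoeff (Finsupp.filter_pos_add_filter_neg x.coeff _)
  have hsplit : x1 - x = -b := by rw [← hab]; abel
  rw [hsplit]
  apply Submodule.neg_mem
  apply Submodule.mem_sup_right
  intro w hw
  by_contra h
  simp [hbdef, Finsupp.filter_apply, h] at hw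

end quot


open scoped Classical in
lemma freeMonoid_lift_zero {A : Type*} [MonoidWithZero A] (w : FreeMonoid (Fin d)) :
    FreeMonoid.lift (fun _ : Fin d => (0 : A)) w = if w = 1 then 1 else 0 := by
  induction w using FreeMonoid.inductionOn' with
  | one => simp
  | of_mul i xs ih =>
      rw [map_mul]
      have : FreeMonoid.of i * xs ≠ 1 := by
        intro h
        have := congrArg FreeMonoid.length h
        simp [FreeMonoid.length_mul] at this
      simp [FreeMonoid.lift_eval_of, this]

lemma evalTuple_zero {A : Type*} [Semiring A] [Algebra ℂ A] (p : FreeAlg d) :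
    evalTuple (fun _ : Fin d => (0 : A)) p = algebraMap ℂ A (p.coeff 1) := by
  classical
  induction p using MonoidAlgebra.induction_linear with
  | zero => simp
  | add f g hf hg => rw [map_add, hf, hg, ← map_add]; rfl
  | single w c =>
      classical
      rw [evalTuple, MonoidAlgebra.lift_single, freeMonoid_lift_zero]
      by_cases h : w = (1 : FreeMonoid (Fin d)) <;>
        simp [h, MonoidAlgebra.coeff_single, Finsupp.single_apply, Algebra.algebraMap_eq_smul_one]

section hilb

variable {H : Type*} [NormedAddCommGroup H] [InnerProductSpace ℂ H] [CompleteSpace H]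
variable {V : Type*} [AddCommGroup V] [Module ℂ V]
variable (K : Submodule ℂ H) [FiniteDimensional ℂ ↥K] (e : V ≃ₗ[ℂ] K)

def Phi (a : Module.End ℂ V) : H →L[ℂ] H :=
  K.subtypeL ∘L (LinearMap.toContinuousLinearMap
    (e.toLinearMap ∘ₗ a ∘ₗ e.symm.toLinearMap)) ∘L (K.orthogonalProjectionOnto)

lemma Phi_apply (a : Module.End ℂ V) (x : H) :
    Phi K e a x = ↑(e (a (e.symm (K.orthogonalProjectionOnto x)))) := rfl

lemma Phi_comp (a b : Module.End ℂ V) : Phi K e a * Phi K e b = Phi K e (a * b) := by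
  ext x
  simp only [ContinuousLinearMap.mul_apply, Phi_apply, Module.End.mul_apply]
  rw [Submodule.orthogonalProjectionOnto_mem_subspace_eq_self, LinearEquiv.symm_apply_apply]

lemma Phi_add (a b : Module.End ℂ V) : Phi K e (a + b) = Phi K e a + Phi K e b := by
  ext x
  simp [Phi_apply, ContinuousLinearMap.add_apply]

lemma Phi_smul (c : ℂ) (a : Module.End ℂ V) : Phi K e (c • a) = c • Phi K e a := by
  ext x
  simp [Phi_apply]

lemma Phi_zero : Phi K e 0 = 0 := by
  ext x
  simp [Phi_apply]

variable {d : ℕ}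

/-- the compression of the evaluation representation to `H`. -/
def chi (psi' : FreeAlg d →ₐ[ℂ] Module.End ℂ V) : FreeAlg d →ₐ[ℂ] (H →L[ℂ] H) where
  toFun q := evalTuple (fun _ : Fin d => (0 : ℂ)) q • (1 - Phi K e 1) + Phi K e (psi' q)
  map_one' := by
    simp only [map_one, one_smul]
    rw [sub_add_cancel]
  map_mul' q r := by
    have haa : (1 - Phi K e 1) * (1 - Phi K e 1) = 1 - Phi K e 1 := by
      rw [sub_mul, one_mul, mul_sub, mul_one, Phi_comp, one_mul]
      abel
    have h1 : ∀ b, (1 - Phi K e 1) * Phi K e b = 0 := fun b => by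
      rw [sub_mul, one_mul, Phi_comp, one_mul, sub_self]
    have h2 : ∀ b, Phi K e b * (1 - Phi K e 1) = 0 := fun b => by
      rw [mul_sub, mul_one, Phi_comp, mul_one, sub_self]
    simp only [map_mul]
    rw [(Phi_comp K e (psi' q) (psi' r)).symm]
    conv_rhs => rw [add_mul, mul_add, mul_add]
    rw [smul_mul_assoc, smul_mul_assoc, mul_smul_comm, mul_smul_comm, smul_smul, haa,
      h1 (psi' r), h2 (psi' q), smul_zero, smul_zero, add_zero, zero_add]
  map_zero' := by simp [Phi_zero]
  map_add' q r := by
    simp only [map_add, Phi_add, add_smul]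
    abel
  commutes' c := by
    simp only [AlgHom.commutes]
    rw [Algebra.algebraMap_self_apply, Algebra.algebraMap_eq_smul_one (A := Module.End ℂ V),
      Phi_smul, ← smul_add, sub_add_cancel,
      ← Algebra.algebraMap_eq_smul_one (A := H →L[ℂ] H)]


lemma chi_apply (psi' : FreeAlg d →ₐ[ℂ] Module.End ℂ V) (q : FreeAlg d) :
    chi K e psi' q
      = evalTuple (fun _ : Fin d => (0 : ℂ)) q • (1 - Phi K e 1) + Phi K e (psi' q) := rfl

lemma exists_subspace_equiv (hinf : ¬ FiniteDimensional ℂ H) (V : Type*)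
    [AddCommGroup V] [Module ℂ V] [FiniteDimensional ℂ V] :
    ∃ (K : Submodule ℂ H) (_ : FiniteDimensional ℂ ↥K), Nonempty (V ≃ₗ[ℂ] K) := by
  set m := Module.finrank ℂ V
  set B := Module.Basis.ofVectorSpace ℂ H
  haveI : Infinite (Module.Basis.ofVectorSpaceIndex ℂ H) := by
    rw [Set.infinite_coe_iff]
    intro hfin
    haveI := hfin.fintype
    exact hinf (Module.Finite.of_basis B)
  set g : Fin m → Module.Basis.ofVectorSpaceIndex ℂ H :=
    fun i => (Infinite.natEmbedding _) (i : ℕ) with hg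
  have hginj : Function.Injective g := by
    intro a b hab
    have := (Infinite.natEmbedding (Module.Basis.ofVectorSpaceIndex ℂ H)).injective hab
    exact Fin.val_injective this
  have hli : LinearIndependent ℂ (fun i : Fin m => B (g i)) :=
    B.linearIndependent.comp g hginj
  refine ⟨Submodule.span ℂ (Set.range fun i : Fin m => B (g i)),
    FiniteDimensional.span_of_finite ℂ (Set.finite_range _),
    ⟨(Module.finBasis ℂ V).equiv (Module.Basis.span hli) (Equiv.refl _)⟩⟩

end hilb

lemma coeff_one_eq_zero {J : TwoSidedIdeal (FreeAlg d)} (hJ : IsHomogIdeal J)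
    (hJtop : J ≠ ⊤) {q : FreeAlg d} (hq : q ∈ J) : q.coeff 1 = 0 := by
  classical
  by_contra hne
  have h0 : homogComp 0 q ∈ J := hJ q hq 0
  have hco : homogComp 0 q = (q.coeff 1) • (1 : FreeAlg d) := by
    ext w
    rw [homogComp, MonoidAlgebra.coeff_ofCoeff, Finsupp.filter_apply]
    by_cases h : w = (1 : FreeMonoid (Fin d))
    · subst h
      simp [MonoidAlgebra.one_def, MonoidAlgebra.coeff_smul, MonoidAlgebra.coeff_single, Finsupp.single_apply, FreeMonoid.length_eq_zero]
    · simp [MonoidAlgebra.one_def, MonoidAlgebra.coeff_smul, MonoidAlgebra.coeff_single, Finsupp.single_apply, FreeMonoid.length_eq_zero, h,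
        Ne.symm h]
  have h1 : (1 : FreeAlg d) ∈ J := by
    have hmul := J.mul_mem_left (algebraMap ℂ (FreeAlg d) (q.coeff 1)⁻¹) _ h0
    rw [hco, ← Algebra.smul_def, smul_smul, inv_mul_cancel₀ hne, one_smul] at hmul
    exact hmul
  exact hJtop (J.eq_top h1)

lemma mem_J_of_mem_Mmod {J : TwoSidedIdeal (FreeAlg d)} (hJ : IsHomogIdeal J) {p : FreeAlg d}
    (hpM : p ∈ Mmod J (p.coeff.support.sup FreeMonoid.length)) : p ∈ J := by
  classical
  set N := p.coeff.support.sup FreeMonoid.length with hN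
  obtain ⟨j, hj, t, ht, hjs⟩ := Submodule.mem_sup.mp hpM
  have hps : p = ∑ n ∈ Finset.range (N + 1), homogComp n j := by
    ext w
    rw [MonoidAlgebra.coeff_sum, Finsupp.finset_sum_apply]
    have hrhs : ∑ n ∈ Finset.range (N + 1), (homogComp n j).coeff w
        = if FreeMonoid.length w ∈ Finset.range (N + 1) then j.coeff w else 0 := by
      rw [← Finset.sum_ite_eq (Finset.range (N + 1)) (FreeMonoid.length w)
        (fun _ => j.coeff w)]
      refine Finset.sum_congr rfl fun n _ => ?_
      rw [homogComp, MonoidAlgebra.coeff_ofCoeff, Finsupp.filter_apply]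
    rw [hrhs]
    by_cases hw : FreeMonoid.length w ≤ N
    · rw [if_pos (Finset.mem_range.mpr (by omega))]
      have htw : t.coeff w = 0 := by
        by_contra h
        exact absurd (ht w (Finsupp.mem_support_iff.mpr h)) (by omega)
      have hadd : p.coeff w = j.coeff w + t.coeff w := by rw [← hjs]; rfl
      rw [hadd, htw, add_zero]
    · rw [if_neg (by simp; omega)]
      by_contra h
      have hw2 : w ∈ p.coeff.support := Finsupp.mem_support_iff.mpr h
      have := Finset.le_sup (f := FreeMonoid.length) hw2
      omega
  rw [hps]
  exact J.finsetSum_mem _ _ fun n _ => hJ j hj n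

theorem key {H : Type*} [NormedAddCommGroup H] [InnerProductSpace ℂ H] [CompleteSpace H]
    (hinf : ¬ FiniteDimensional ℂ H) (J : TwoSidedIdeal (FreeAlg d)) (hJ : IsHomogIdeal J)
    (hJtop : J ≠ ⊤) {p : FreeAlg d} (hp : p ∉ J) :
    ∃ T : Fin d → H →L[ℂ] H, (∀ q ∈ J, evalTuple T q = 0) ∧ evalTuple T p ≠ 0 := by
  classical
  set N := p.coeff.support.sup FreeMonoid.length with hN
  haveI : FiniteDimensional ℂ (FreeAlg d ⧸ Mmod J N) := finiteDimensional_quot J N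
  obtain ⟨K, instK, ⟨e⟩⟩ := exists_subspace_equiv hinf (FreeAlg d ⧸ Mmod J N)
  haveI := instK
  set χ := chi K e (psi J N) with hχ
  set T : Fin d → H →L[ℂ] H :=
    fun i => χ (MonoidAlgebra.of ℂ (FreeMonoid (Fin d)) (FreeMonoid.of i)) with hT
  have heval : evalTuple T = χ := by
    refine MonoidAlgebra.algHom_ext' ?_ (Subsingleton.elim _ _)
    apply FreeMonoid.hom_eq
    intro i
    rw [MonoidHom.comp_apply, MonoidHom.comp_apply]
    show evalTuple T (MonoidAlgebra.of ℂ (FreeMonoid (Fin d)) (FreeMonoid.of i)) = _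
    rw [evalTuple, MonoidAlgebra.lift_of, FreeMonoid.lift_eval_of]
    rfl
  refine ⟨T, ?_, ?_⟩
  · intro q hq
    rw [heval, hχ, chi_apply, psi_eq_zero_of_mem J N hq, Phi_zero]
    have : evalTuple (fun _ : Fin d => (0 : ℂ)) q = 0 := by
      rw [evalTuple_zero, coeff_one_eq_zero hJ hJtop hq, map_zero]
    rw [this, zero_smul, zero_add]
  · intro h0
    rw [heval, hχ] at h0
    set u : K := e (Submodule.Quotient.mk 1) with hu
    have happ := congrArg (fun f : H →L[ℂ] H => f (u : H)) h0
    simp only [ContinuousLinearMap.zero_apply] at happ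
    rw [chi_apply] at happ
    have hproj : K.orthogonalProjectionOnto (u : H) = u :=
      Submodule.orthogonalProjectionOnto_mem_subspace_eq_self u
    have h1u : (1 - Phi K e 1) (u : H) = 0 := by
      rw [ContinuousLinearMap.sub_apply, ContinuousLinearMap.one_apply, Phi_apply, hproj,
        Module.End.one_apply, LinearEquiv.apply_symm_apply, sub_self]
    rw [ContinuousLinearMap.add_apply, ContinuousLinearMap.smul_apply, h1u, smul_zero,
      zero_add, Phi_apply, hproj] at happ
    have : e (psi J N p (e.symm u)) = 0 := by
      exact_mod_cast happ
    rw [hu, LinearEquiv.symm_apply_apply, psi_apply, mul_one] at this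
    have hpM : p ∈ Mmod J N := by
      rw [← Submodule.Quotient.mk_eq_zero]
      simpa using (LinearEquiv.map_eq_zero_iff e).mp this
    exact hp (mem_J_of_mem_Mmod hJ hpM)

lemma evalC_eq_coeff (p : FreeAlg d) :
    evalTuple (fun _ : Fin d => (0 : ℂ)) p = p.coeff 1 := by
  rw [evalTuple_zero]; simp

lemma evalC_of_gen (i : Fin d) :
    evalTuple (fun _ : Fin d => (0 : ℂ))
      (MonoidAlgebra.of ℂ (FreeMonoid (Fin d)) (FreeMonoid.of i)) = 0 := by
  rw [evalTuple, MonoidAlgebra.lift_of, FreeMonoid.lift_eval_of]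

lemma mem_span_gens_iff {p : FreeAlg d} :
    p ∈ TwoSidedIdeal.span (Set.range fun i : Fin d =>
        MonoidAlgebra.of ℂ (FreeMonoid (Fin d)) (FreeMonoid.of i)) ↔ p.coeff 1 = 0 := by
  classical
  constructor
  · intro hp
    rw [← evalC_eq_coeff]
    have hker := TwoSidedIdeal.mem_span_iff.mp hp
      (TwoSidedIdeal.ker (evalTuple (fun _ : Fin d => (0 : ℂ))).toRingHom) ?_
    · exact (TwoSidedIdeal.mem_ker _).mp hker
    · rintro x ⟨i, rfl⟩
      exact (TwoSidedIdeal.mem_ker _).mpr (evalC_of_gen i)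
  · intro hp1
    set I := TwoSidedIdeal.span (Set.range fun i : Fin d =>
      MonoidAlgebra.of ℂ (FreeMonoid (Fin d)) (FreeMonoid.of i)) with hI
    have hmono : ∀ (w : FreeMonoid (Fin d)) (c : ℂ), w ≠ 1 → MonoidAlgebra.single w c ∈ I := by
      intro w c hw
      induction w using FreeMonoid.casesOn with
      | one => exact absurd rfl hw
      | of_mul i xs =>
          have hsm : (MonoidAlgebra.single (FreeMonoid.of i * xs) c : FreeAlg d)
              = MonoidAlgebra.of ℂ (FreeMonoid (Fin d)) (FreeMonoid.of i)
                * MonoidAlgebra.single xs c := by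
            rw [MonoidAlgebra.of_apply, MonoidAlgebra.single_mul_single, one_mul]
          rw [hsm]
          exact I.mul_mem_right _ _
            (TwoSidedIdeal.subset_span ⟨i, rfl⟩)
    rw [← MonoidAlgebra.sum_coeff_single p]
    apply I.finsetSum_mem
    intro w hw
    by_cases h : w = 1
    · subst h
      rw [hp1]
      simpa using I.zero_mem
    · exact hmono w (p.coeff w) h

end NCNull

open NCNull

/-- **The noncommutative projective Nullstellensatz.**  For a homogeneous two-sided ideal
`J` of `ℂ⟨x₁,…,x_d⟩` and an infinite-dimensional separable Hilbert space `H`, the set of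
polynomials vanishing on the zero set `Z(J) ⊆ B(H)^d` of `J` is exactly `J`; in particular
`Z(J) = {0}` iff `J` is the two-sided ideal generated by `x₁,…,x_d`. -/
theorem stmt9
    {H : Type*} [NormedAddCommGroup H] [InnerProductSpace ℂ H] [CompleteSpace H]
    [TopologicalSpace.SeparableSpace H] (hinf : ¬ FiniteDimensional ℂ H)
    (d : ℕ) (hd : 1 ≤ d)
    (J : TwoSidedIdeal (FreeAlg d)) (hJ : IsHomogIdeal J) :
    ({p : FreeAlg d | ∀ T : Fin d → H →L[ℂ] H,
        (∀ q ∈ J, evalTuple T q = 0) → evalTuple T p = 0} = (J : Set (FreeAlg d))) ∧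
    ({T : Fin d → H →L[ℂ] H | ∀ q ∈ J, evalTuple T q = 0} = {fun _ => 0} ↔
      J = TwoSidedIdeal.span (Set.range fun i : Fin d =>
        MonoidAlgebra.of ℂ (FreeMonoid (Fin d)) (FreeMonoid.of i))) := by
  classical
  have hntH : Nontrivial H := by
    by_contra h
    rw [not_nontrivial_iff_subsingleton] at h
    exact hinf (by infer_instance)
  have hinj : ∀ c : ℂ, (algebraMap ℂ (H →L[ℂ] H)) c = 0 → c = 0 := by
    intro c hc
    obtain ⟨x, hx⟩ := exists_ne (0 : H)
    have hcx := congrArg (fun f : H →L[ℂ] H => f x) hc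
    simp only [Algebra.algebraMap_eq_smul_one, ContinuousLinearMap.smul_apply,
      ContinuousLinearMap.one_apply, ContinuousLinearMap.zero_apply] at hcx
    rcases smul_eq_zero.mp hcx with h | h
    · exact h
    · exact absurd h hx
  have hfirst : {p : FreeAlg d | ∀ T : Fin d → H →L[ℂ] H,
      (∀ q ∈ J, evalTuple T q = 0) → evalTuple T p = 0} = (J : Set (FreeAlg d)) := by
    ext p
    simp only [Set.mem_setOf_eq, SetLike.mem_coe]
    constructor
    · intro h
      by_cases hJtop : J = ⊤
      · subst hJtop; exact TwoSidedIdeal.mem_top _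
      · by_contra hp
        obtain ⟨T, hT, hpT⟩ := key hinf J hJ hJtop hp
        exact hpT (h T hT)
    · intro hp T hT
      exact hT p hp
  refine ⟨hfirst, ?_, ?_⟩
  · intro hZ
    have h2 : (J : Set (FreeAlg d))
        = {p : FreeAlg d | evalTuple (fun _ : Fin d => (0 : H →L[ℂ] H)) p = 0} := by
      rw [← hfirst]
      ext p
      simp only [Set.mem_setOf_eq]
      constructor
      · intro h
        refine h _ ?_
        have : (fun _ : Fin d => (0 : H →L[ℂ] H)) ∈
            {T : Fin d → H →L[ℂ] H | ∀ q ∈ J, evalTuple T q = 0} := by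
          rw [hZ]; exact Set.mem_singleton _
        exact this
      · intro h T hT
        have hTZ : T ∈ {T : Fin d → H →L[ℂ] H | ∀ q ∈ J, evalTuple T q = 0} := hT
        rw [hZ, Set.mem_singleton_iff] at hTZ
        rw [hTZ]
        exact h
    apply SetLike.coe_set_eq.mp
    rw [h2]
    ext q
    simp only [Set.mem_setOf_eq, SetLike.mem_coe]
    rw [mem_span_gens_iff, evalTuple_zero]
    constructor
    · intro h; exact hinj _ h
    · intro h; rw [h, map_zero]
  · intro hspan
    ext T
    simp only [Set.mem_setOf_eq, Set.mem_singleton_iff]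
    constructor
    · intro hT
      funext i
      have hgen : MonoidAlgebra.of ℂ (FreeMonoid (Fin d)) (FreeMonoid.of i) ∈ J := by
        rw [hspan]
        exact TwoSidedIdeal.subset_span ⟨i, rfl⟩
      have h := hT _ hgen
      rw [show evalTuple T (MonoidAlgebra.of ℂ (FreeMonoid (Fin d)) (FreeMonoid.of i)) = T i
        from by rw [evalTuple, MonoidAlgebra.lift_of, FreeMonoid.lift_eval_of]] at h
      exact h
    · rintro rfl
      intro q hq
      rw [hspan] at hq
      rw [evalTuple_zero, mem_span_gens_iff.mp hq, map_zero]
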